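/- Consider a family of PIN models with parameters (𝒜, ρ, P_α, φ_α) indexed by α > 0, with limit drifts D̄_α, on a sequence of interaction graphs G_n (G_n having n nodes and at least one link) with total mixing gaps W_{G_n} → 0 as n → ∞. Suppose there are twice continuously differentiable functions V_α : ℝ^𝒜 → ℝ for α > 0, a continuous nonnegative function h : P(𝒜) → ℝ₊, and a nonnegative function ζ : ℝ₊ → ℝ₊ with ζ(α) → 0 as α → 0, such that ∇V_α(θ)·D̄_α(θ) ≤ −h(θ) + ζ(α) for all θ ∈ P(𝒜) and all α > 0. For each α > 0 and each n ≥ 2, let μ_n^{(α)} be a stationary distribution of the PIN model with parameters (𝒜, ρ, P_α, φ_α) on G_n. Then for every δ > 0, lim_{α→0} liminf_{n→∞} μ_n^{(α)}({x : h(θ(x)) < δ}) = 1. -/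

import Mathlib

open Finset Filter

noncomputable section

/-- The empirical type (state frequencies) of a configuration. -/
def confType {V A : Type*} [Fintype V] [DecidableEq A] (x : V → A) (i : A) : ℝ :=
  ((Finset.univ.filter fun v => x v = i).card : ℝ) / (Fintype.card V : ℝ)

/-- The boundary (empirical link-pair frequencies) of a configuration. -/
def boundary {V A : Type*} [DecidableEq A] (E : Finset (V × V)) (x : V → A) (i j : A) : ℝ :=
  ((E.filter fun e => x e.1 = i ∧ x e.2 = j).card : ℝ) / (E.card : ℝ)

/-- Off-diagonal part of the PIN transition matrix. -/
def Toff {V A : Type*} [Fintype V] [DecidableEq V] [DecidableEq A]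
    (E : Finset (V × V)) (ρ : ℝ) (P : A → A → ℝ) (φ : A → A → A → ℝ) (x y : V → A) : ℝ :=
  if (Finset.univ.filter fun v => x v ≠ y v).card = 1 then
    ∑ u ∈ Finset.univ.filter fun v => x v ≠ y v,
      ((1 - ρ) * (1 / (Fintype.card V : ℝ)) * P (x u) (y u)
        + (ρ / (E.card : ℝ)) * ∑ e ∈ E.filter fun e => e.1 = u, φ (x u) (y u) (x e.2))
  else 0

/-- The PIN transition matrix. -/
def pinTrans {V A : Type*} [Fintype V] [DecidableEq V] [Fintype A] [DecidableEq A]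
    (E : Finset (V × V)) (ρ : ℝ) (P : A → A → ℝ) (φ : A → A → A → ℝ) (x y : V → A) : ℝ :=
  if x = y then 1 - ∑ z : V → A, Toff E ρ P φ x z else Toff E ρ P φ x y

/-- The mean drift of the PIN model. -/
def meanDrift {V A : Type*} [Fintype V] [DecidableEq V] [Fintype A] [DecidableEq A]
    (E : Finset (V × V)) (ρ : ℝ) (P : A → A → ℝ) (φ : A → A → A → ℝ) (x : V → A) (i : A) : ℝ :=
  (Fintype.card V : ℝ) * ∑ y : V → A, pinTrans E ρ P φ x y * (confType y i - confType x i)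

/-- The limit drift of the PIN model. -/
def limitDrift {A : Type*} [Fintype A] (ρ : ℝ) (P : A → A → ℝ) (φ : A → A → A → ℝ)
    (θ : A → ℝ) (i : A) : ℝ :=
  ((1 - ρ) * ∑ j, P j i * θ j) + (ρ * ∑ ℓ, θ ℓ * ∑ j, φ j i ℓ * θ j) - θ i

/-- The linear operator Q acting on boundaries. -/
def Qop {A : Type*} [Fintype A] (φ : A → A → A → ℝ) (ξ : A → A → ℝ) (i : A) : ℝ :=
  (∑ ℓ, ∑ j, ξ j ℓ * φ j i ℓ) - ∑ ℓ, ξ i ℓ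

/-- Membership in the probability simplex over `A`. -/
def inSimplex {A : Type*} [Fintype A] (θ : A → ℝ) : Prop :=
  (∀ i, 0 ≤ θ i) ∧ ∑ i, θ i = 1

/-- The hypotheses on the parameters of a PIN model: `ρ ∈ [0,1]`, `P` and each `φ(ℓ)`
row-stochastic and nonnegative, the interaction graph nonempty and without self-loops. -/
def IsPinModel {V A : Type*} [Fintype A] (E : Finset (V × V)) (ρ : ℝ)
    (P : A → A → ℝ) (φ : A → A → A → ℝ) : Prop :=
  0 ≤ ρ ∧ ρ ≤ 1 ∧ (∀ i j, 0 ≤ P i j) ∧ (∀ i, ∑ j, P i j = 1) ∧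
    (∀ i j ℓ, 0 ≤ φ i j ℓ) ∧ (∀ i ℓ, ∑ j, φ i j ℓ = 1) ∧
    E.Nonempty ∧ ∀ e ∈ E, e.1 ≠ e.2

/-- Stationary distribution of a PIN model. -/
def IsStationaryPin {V A : Type*} [Fintype V] [DecidableEq V] [Fintype A] [DecidableEq A]
    (E : Finset (V × V)) (ρ : ℝ) (P : A → A → ℝ) (φ : A → A → A → ℝ)
    (μ : (V → A) → ℝ) : Prop :=
  (∀ x, 0 ≤ μ x) ∧ (∑ x : V → A, μ x = 1) ∧
    ∀ y : V → A, ∑ x : V → A, μ x * pinTrans E ρ P φ x y = μ y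

/-- The total mixing gap of a graph. -/
def mixingGap {V : Type*} [Fintype V] [DecidableEq V] (E : Finset (V × V)) : ℝ :=
  sSup {w : ℝ | ∃ S U : Finset V, Disjoint S U ∧
    w = |((E.filter fun e => e.1 ∈ S ∧ e.2 ∈ U).card : ℝ) / (E.card : ℝ) -
      ((S.card : ℝ) * (U.card : ℝ)) / ((Fintype.card V : ℝ) * ((Fintype.card V : ℝ) - 1))|}

open Classical in
/-- Total `μ`-mass of the set of configurations satisfying `p`. -/
def massOf {X : Type*} [Fintype X] (μ : X → ℝ) (p : X → Prop) : ℝ :=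
  ∑ x, if p x then μ x else 0

section Reindex
variable {V A : Type*} [Fintype V] [DecidableEq V] [DecidableEq A]
  (E : Finset (V × V)) (ρ : ℝ) (P : A → A → ℝ) (φ : A → A → A → ℝ)

lemma toff_self (x : V → A) : Toff E ρ P φ x x = 0 := by
  unfold Toff
  simp

lemma filter_update_ne {x : V → A} {u : V} {b : A} (hb : b ≠ x u) :
    (Finset.univ.filter fun v => x v ≠ Function.update x u b v) = {u} := by
  ext v
  simp only [mem_filter, mem_univ, true_and, mem_singleton]
  rcases eq_or_ne v u with rfl | hv
  · simp [Function.update_self, Ne.symm hb]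
  · simp [Function.update_of_ne hv, hv]

lemma toff_update {x : V → A} {u : V} {b : A} (hb : b ≠ x u) :
    Toff E ρ P φ x (Function.update x u b) =
      (1 - ρ) * (1 / (Fintype.card V : ℝ)) * P (x u) b
        + (ρ / (E.card : ℝ)) * ∑ e ∈ E.filter fun e => e.1 = u, φ (x u) b (x e.2) := by
  unfold Toff
  rw [filter_update_ne hb]
  simp [Function.update_self]

/-- reindexing sums of `Toff x y * c y` over configurations by pairs `(u,b)`. -/
lemma sum_toff_mul [Fintype A] (x : V → A) (c : (V → A) → ℝ) :
    ∑ y : V → A, Toff E ρ P φ x y * c y =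
      ∑ p ∈ (Finset.univ ×ˢ Finset.univ : Finset (V × A)).filter fun p => p.2 ≠ x p.1,
        Toff E ρ P φ x (Function.update x p.1 p.2) * c (Function.update x p.1 p.2) := by
  classical
  have h1 : ∑ y : V → A, Toff E ρ P φ x y * c y =
      ∑ y ∈ Finset.univ.filter fun y : V → A =>
          (Finset.univ.filter fun v => x v ≠ y v).card = 1,
        Toff E ρ P φ x y * c y := by
    refine (Finset.sum_filter_of_ne ?_).symm
    intro y _ hne
    by_contra hc
    apply hne
    unfold Toff
    rw [if_neg hc, zero_mul]
  rw [h1]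
  refine (Finset.sum_bij (fun (p : V × A) (hp : p ∈ (Finset.univ ×ˢ Finset.univ : Finset (V × A)).filter fun p => p.2 ≠ x p.1) => Function.update x p.1 p.2) ?_ ?_ ?_ ?_).symm
  · intro p hp
    simp only [mem_filter, mem_univ, Finset.mem_product, true_and] at hp ⊢
    rw [filter_update_ne hp]
    simp
  · intro p hp q hq heq
    simp only [mem_filter, Finset.mem_product, mem_univ, true_and] at hp hq
    rcases eq_or_ne p.1 q.1 with h1 | h1
    · have h2 : p.2 = q.2 := by
        have := congrFun heq p.1
        rwa [Function.update_self, h1, Function.update_self] at this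
      exact Prod.ext h1 h2
    · exfalso
      have := congrFun heq q.1
      rw [Function.update_of_ne (Ne.symm h1), Function.update_self] at this
      exact hq (this ▸ rfl)
  · intro y hy
    simp only [mem_filter, mem_univ, true_and] at hy
    obtain ⟨u, hu⟩ := Finset.card_eq_one.mp hy
    have hxu : x u ≠ y u := by
      have : u ∈ ({u} : Finset V) := Finset.mem_singleton_self u
      rw [← hu] at this
      simpa using this
    refine ⟨(u, y u), ?_, ?_⟩
    · simp [Ne.symm hxu]
    · funext v
      rcases eq_or_ne v u with rfl | hv
      · simp [Function.update_self]
      · have : v ∉ ({u} : Finset V) := by simpa using hv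
        rw [← hu] at this
        simp only [mem_filter, mem_univ, true_and, not_not] at this
        simp [Function.update_of_ne hv, this]
  · intro p hp
    rfl

end Reindex

section DriftFormula
variable {V A : Type*} [Fintype V] [DecidableEq V] [Fintype A] [DecidableEq A]
  (E : Finset (V × V)) (ρ : ℝ) (P : A → A → ℝ) (φ : A → A → A → ℝ)


lemma sum_pin_mul (x : V → A) (c : (V → A) → ℝ) (hc : c x = 0) :
    ∑ y : V → A, pinTrans E ρ P φ x y * c y = ∑ y : V → A, Toff E ρ P φ x y * c y := by
  refine Finset.sum_congr rfl fun y _ => ?_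
  rcases eq_or_ne x y with rfl | hxy
  · rw [hc, mul_zero, mul_zero]
  · rw [pinTrans, if_neg hxy]

lemma card_filter_update (x : V → A) (u : V) (b : A) (i : A) :
    (((Finset.univ.filter fun v => Function.update x u b v = i).card : ℝ)) =
      ((Finset.univ.filter fun v => x v = i).card : ℝ)
        + ((if b = i then (1:ℝ) else 0) - (if x u = i then (1:ℝ) else 0)) := by
  have huniv : (Finset.univ : Finset V) = insert u (Finset.univ.erase u) := by
    rw [Finset.insert_erase (Finset.mem_univ u)]
  have hkey : ∀ (c : A), ((Finset.univ.filter fun v => Function.update x u c v = i).card : ℝ) =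
      ((Finset.univ.erase u).filter fun v => x v = i).card + (if c = i then (1:ℝ) else 0) := by
    intro c
    conv_lhs => rw [huniv]
    rw [Finset.filter_insert]
    have hcong : ((Finset.univ.erase u).filter fun v => Function.update x u c v = i) =
        ((Finset.univ.erase u).filter fun v => x v = i) := by
      refine Finset.filter_congr fun v hv => ?_
      rw [Function.update_of_ne (Finset.ne_of_mem_erase hv)]
    simp only [Function.update_self]
    by_cases hc : c = i
    · rw [if_pos hc, if_pos hc,
        Finset.card_insert_of_notMem (fun hmem => (Finset.mem_erase.mp (Finset.mem_of_mem_filter u hmem)).1 rfl), hcong]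
      push_cast
      ring
    · rw [if_neg hc, if_neg hc, hcong]
      ring
  have h1 := hkey b
  have h2 : ((Finset.univ.filter fun v => x v = i).card : ℝ) =
      ((Finset.univ.erase u).filter fun v => x v = i).card + (if x u = i then (1:ℝ) else 0) := by
    have := hkey (x u)
    rwa [Function.update_eq_self] at this
  rw [h1, h2]
  ring

lemma confType_update (x : V → A) (u : V) (b : A) (i : A) :
    confType (Function.update x u b) i - confType x i =
      ((if b = i then (1:ℝ) else 0) - (if x u = i then (1:ℝ) else 0)) / (Fintype.card V : ℝ) := by
  unfold confType
  rw [card_filter_update]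
  ring

lemma meanDrift_formula (hn : 0 < Fintype.card V) (hm : E.Nonempty)
    (hP : ∀ a, ∑ b, P a b = 1) (hφ : ∀ a ℓ, ∑ b, φ a b ℓ = 1) (x : V → A) (i : A) :
    (Fintype.card V : ℝ) * ∑ y : V → A, pinTrans E ρ P φ x y * (confType y i - confType x i) =
      (1 - ρ) * ((∑ j, P j i * confType x j) - confType x i)
        + ρ * ((∑ ℓ, ∑ j, boundary E x j ℓ * φ j i ℓ) - ∑ ℓ, boundary E x i ℓ) := by
  have hn' : (Fintype.card V : ℝ) ≠ 0 := Nat.cast_pos.mpr hn |>.ne'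
  have hm' : (E.card : ℝ) ≠ 0 := Nat.cast_pos.mpr (Finset.card_pos.mpr hm) |>.ne'
  rw [sum_pin_mul _ _ _ _ _ _ (by ring), sum_toff_mul]
  -- extend sum to full product
  rw [Finset.sum_filter_of_ne (f := fun p : V × A =>
      Toff E ρ P φ x (Function.update x p.1 p.2) * (confType (Function.update x p.1 p.2) i - confType x i))
      (by
        intro p _ hne hpb
        apply hne
        show Toff E ρ P φ x (Function.update x p.1 p.2) *
          (confType (Function.update x p.1 p.2) i - confType x i) = 0
        rw [confType_update, hpb]
        simp)]
  rw [Finset.sum_product]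
  -- rewrite each term
  have hterm : ∀ u : V, ∀ b : A, b ≠ x u →
      Toff E ρ P φ x (Function.update x u b) * (confType (Function.update x u b) i - confType x i) =
      ((1 - ρ) * (1 / (Fintype.card V : ℝ)) * P (x u) b
        + (ρ / (E.card : ℝ)) * ∑ e ∈ E.filter fun e => e.1 = u, φ (x u) b (x e.2))
        * (((if b = i then (1:ℝ) else 0) - (if x u = i then (1:ℝ) else 0)) / (Fintype.card V : ℝ)) := by
    intro u b hb
    rw [toff_update _ _ _ _ hb, confType_update]
  have hsum : ∀ u : V, ∑ b : A,
      Toff E ρ P φ x (Function.update x u b) * (confType (Function.update x u b) i - confType x i) =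
      ∑ b : A, ((1 - ρ) * (1 / (Fintype.card V : ℝ)) * P (x u) b
        + (ρ / (E.card : ℝ)) * ∑ e ∈ E.filter fun e => e.1 = u, φ (x u) b (x e.2))
        * (((if b = i then (1:ℝ) else 0) - (if x u = i then (1:ℝ) else 0)) / (Fintype.card V : ℝ)) := by
    intro u
    refine Finset.sum_congr rfl fun b _ => ?_
    rcases eq_or_ne b (x u) with rfl | hb
    · rw [confType_update]
      simp
    · exact hterm u b hb
  rw [Finset.sum_congr rfl fun u _ => hsum u]
  set n : ℝ := (Fintype.card V : ℝ) with hndef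
  set m : ℝ := (E.card : ℝ) with hmdef
  have hinner : ∀ u : V, ∑ b : A, ((1 - ρ) * (1 / n) * P (x u) b
        + (ρ / m) * ∑ e ∈ E.filter fun e => e.1 = u, φ (x u) b (x e.2))
        * (((if b = i then (1:ℝ) else 0) - (if x u = i then (1:ℝ) else 0)) / n) =
      (1 / n) * ((1 - ρ) * (1 / n) * (P (x u) i - (if x u = i then (1:ℝ) else 0))
        + (ρ / m) * ∑ e ∈ E.filter fun e => e.1 = u, (φ (x u) i (x e.2) - (if x u = i then (1:ℝ) else 0))) := by
    intro u
    have e1 : ∑ b : A, P (x u) b * (if b = i then (1:ℝ) else 0) = P (x u) i := by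
      simp [Finset.sum_ite_eq']
    have e2 : ∑ b : A, P (x u) b = 1 := hP (x u)
    have e3 : ∑ b : A, (∑ e ∈ E.filter fun e => e.1 = u, φ (x u) b (x e.2)) * (if b = i then (1:ℝ) else 0)
        = ∑ e ∈ E.filter fun e => e.1 = u, φ (x u) i (x e.2) := by
      simp [Finset.sum_ite_eq']
    have e4 : ∑ b : A, ∑ e ∈ E.filter fun e => e.1 = u, φ (x u) b (x e.2)
        = ((E.filter fun e => e.1 = u).card : ℝ) := by
      rw [Finset.sum_comm]
      rw [Finset.sum_congr rfl fun e _ => hφ (x u) (x e.2)]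
      simp
    have expand : ∀ b : A, ((1 - ρ) * (1 / n) * P (x u) b
          + (ρ / m) * ∑ e ∈ E.filter fun e => e.1 = u, φ (x u) b (x e.2))
          * (((if b = i then (1:ℝ) else 0) - (if x u = i then (1:ℝ) else 0)) / n) =
        (1/n) * ((1 - ρ) * (1/n)) * (P (x u) b * (if b = i then (1:ℝ) else 0))
          - (1/n) * ((1 - ρ) * (1/n)) * (if x u = i then (1:ℝ) else 0) * P (x u) b
          + (1/n) * (ρ / m) * ((∑ e ∈ E.filter fun e => e.1 = u, φ (x u) b (x e.2)) * (if b = i then (1:ℝ) else 0))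
          - (1/n) * (ρ / m) * (if x u = i then (1:ℝ) else 0) * (∑ e ∈ E.filter fun e => e.1 = u, φ (x u) b (x e.2)) := by
      intro b; ring
    rw [Finset.sum_congr rfl fun b _ => expand b]
    rw [Finset.sum_sub_distrib, Finset.sum_add_distrib, Finset.sum_sub_distrib,
      ← Finset.mul_sum, ← Finset.mul_sum, ← Finset.mul_sum, ← Finset.mul_sum, e1, e2, e3, e4]
    rw [Finset.sum_sub_distrib, Finset.sum_const, nsmul_eq_mul]
    push_cast
    ring
  rw [Finset.sum_congr rfl fun u _ => hinner u]
  rw [← Finset.mul_sum]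
  rw [show (n * ((1/n) * ∑ u : V, ((1 - ρ) * (1 / n) * (P (x u) i - (if x u = i then (1:ℝ) else 0))
        + (ρ / m) * ∑ e ∈ E.filter fun e => e.1 = u, (φ (x u) i (x e.2) - (if x u = i then (1:ℝ) else 0))))
      = ∑ u : V, ((1 - ρ) * (1 / n) * (P (x u) i - (if x u = i then (1:ℝ) else 0))
        + (ρ / m) * ∑ e ∈ E.filter fun e => e.1 = u, (φ (x u) i (x e.2) - (if x u = i then (1:ℝ) else 0))))
    from by rw [← mul_assoc, mul_one_div_cancel hn', one_mul]]
  rw [Finset.sum_add_distrib]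
  -- the P-part
  have hP1 : ∑ u : V, P (x u) i = ∑ j : A, ((Finset.univ.filter fun v => x v = j).card : ℝ) * P j i := by
    rw [← Finset.sum_fiberwise Finset.univ x (fun u => P (x u) i)]
    refine Finset.sum_congr rfl fun j _ => ?_
    rw [Finset.sum_congr rfl (fun u hu => by
      rw [(Finset.mem_filter.mp hu).2] : ∀ u ∈ Finset.univ.filter fun u => x u = j, P (x u) i = P j i)]
    rw [Finset.sum_const, nsmul_eq_mul]
  have hP2 : ∑ u : V, (if x u = i then (1:ℝ) else 0) = ((Finset.univ.filter fun v => x v = i).card : ℝ) := by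
    simp [Finset.sum_ite_eq, Finset.sum_boole]
  have hPpart : ∑ u : V, (1 - ρ) * (1 / n) * (P (x u) i - (if x u = i then (1:ℝ) else 0))
      = (1 - ρ) * ((∑ j, P j i * confType x j) - confType x i) := by
    rw [← Finset.mul_sum, Finset.sum_sub_distrib, hP1, hP2]
    unfold confType
    rw [← hndef]
    rw [show (∑ j, P j i * (((Finset.univ.filter fun v => x v = j).card : ℝ) / n))
        = (1/n) * ∑ j : A, ((Finset.univ.filter fun v => x v = j).card : ℝ) * P j i from by
      rw [Finset.mul_sum]; exact Finset.sum_congr rfl fun j _ => by ring]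
    ring
  -- the φ-part
  have hfib : ∑ u : V, (ρ / m) * ∑ e ∈ E.filter fun e => e.1 = u, (φ (x u) i (x e.2) - (if x u = i then (1:ℝ) else 0))
      = (ρ / m) * ∑ e ∈ E, (φ (x e.1) i (x e.2) - (if x e.1 = i then (1:ℝ) else 0)) := by
    rw [← Finset.mul_sum]
    congr 1
    rw [← Finset.sum_fiberwise E Prod.fst (fun e => (φ (x e.1) i (x e.2) - (if x e.1 = i then (1:ℝ) else 0)))]
    refine Finset.sum_congr rfl fun u _ => ?_
    refine Finset.sum_congr rfl fun e he => ?_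
    rw [(Finset.mem_filter.mp he).2]
  have hφ1 : ∑ e ∈ E, φ (x e.1) i (x e.2)
      = ∑ ℓ, ∑ j, ((E.filter fun e => x e.1 = j ∧ x e.2 = ℓ).card : ℝ) * φ j i ℓ := by
    rw [← Finset.sum_fiberwise E (fun e => (x e.1, x e.2)) (fun e => φ (x e.1) i (x e.2))]
    rw [Fintype.sum_prod_type]
    rw [Finset.sum_comm]
    refine Finset.sum_congr rfl fun ℓ _ => Finset.sum_congr rfl fun j _ => ?_
    have hcong : (E.filter fun e => (x e.1, x e.2) = (j, ℓ)) = (E.filter fun e => x e.1 = j ∧ x e.2 = ℓ) := by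
      refine Finset.filter_congr fun e _ => ?_
      simp [Prod.ext_iff]
    rw [Finset.sum_congr hcong (fun e he => by
      obtain ⟨-, h1, h2⟩ := Finset.mem_filter.mp he
      rw [h1, h2])]
    rw [Finset.sum_const, nsmul_eq_mul]
  have hφ2 : ∑ e ∈ E, (if x e.1 = i then (1:ℝ) else 0)
      = ∑ ℓ, ((E.filter fun e => x e.1 = i ∧ x e.2 = ℓ).card : ℝ) := by
    rw [← Finset.sum_filter]
    rw [← Finset.sum_fiberwise (E.filter fun e => x e.1 = i) (fun e => x e.2) (fun _ => (1:ℝ))]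
    refine Finset.sum_congr rfl fun ℓ _ => ?_
    rw [Finset.filter_filter, Finset.sum_const, nsmul_eq_mul, mul_one]
  rw [hPpart, hfib, Finset.sum_sub_distrib, hφ1, hφ2]
  unfold boundary
  rw [← hmdef]
  rw [show (∑ ℓ, ∑ j, (((E.filter fun e => x e.1 = j ∧ x e.2 = ℓ).card : ℝ)/m) * φ j i ℓ)
      = (1/m) * ∑ ℓ, ∑ j, ((E.filter fun e => x e.1 = j ∧ x e.2 = ℓ).card : ℝ) * φ j i ℓ from by
    rw [Finset.mul_sum]
    refine Finset.sum_congr rfl fun ℓ _ => ?_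
    rw [Finset.mul_sum]
    exact Finset.sum_congr rfl fun j _ => by ring]
  rw [show (∑ ℓ, (((E.filter fun e => x e.1 = i ∧ x e.2 = ℓ).card : ℝ)/m))
      = (1/m) * ∑ ℓ, ((E.filter fun e => x e.1 = i ∧ x e.2 = ℓ).card : ℝ) from by
    rw [Finset.mul_sum]
    exact Finset.sum_congr rfl fun ℓ _ => by ring]
  ring
end DriftFormula

section Gap
variable {V : Type*} [Fintype V] [DecidableEq V] (E : Finset (V × V))

lemma gapSet_bddAbove : BddAbove {w : ℝ | ∃ S U : Finset V, Disjoint S U ∧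
    w = |((E.filter fun e => e.1 ∈ S ∧ e.2 ∈ U).card : ℝ) / (E.card : ℝ) -
      ((S.card : ℝ) * (U.card : ℝ)) / ((Fintype.card V : ℝ) * ((Fintype.card V : ℝ) - 1))|} := by
  have hsub : {w : ℝ | ∃ S U : Finset V, Disjoint S U ∧
      w = |((E.filter fun e => e.1 ∈ S ∧ e.2 ∈ U).card : ℝ) / (E.card : ℝ) -
        ((S.card : ℝ) * (U.card : ℝ)) / ((Fintype.card V : ℝ) * ((Fintype.card V : ℝ) - 1))|}
      ⊆ Set.range (fun p : Finset V × Finset V =>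
        |((E.filter fun e => e.1 ∈ p.1 ∧ e.2 ∈ p.2).card : ℝ) / (E.card : ℝ) -
          ((p.1.card : ℝ) * (p.2.card : ℝ)) / ((Fintype.card V : ℝ) * ((Fintype.card V : ℝ) - 1))|) := by
    rintro w ⟨S, U, -, rfl⟩
    exact ⟨(S, U), rfl⟩
  exact ((Set.finite_range _).subset hsub).bddAbove

lemma gap_le (S U : Finset V) (hSU : Disjoint S U) :
    |((E.filter fun e => e.1 ∈ S ∧ e.2 ∈ U).card : ℝ) / (E.card : ℝ) -
      ((S.card : ℝ) * (U.card : ℝ)) / ((Fintype.card V : ℝ) * ((Fintype.card V : ℝ) - 1))|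
      ≤ mixingGap E :=
  le_csSup (gapSet_bddAbove E) ⟨S, U, hSU, rfl⟩

lemma mixingGap_nonneg : 0 ≤ mixingGap E := by
  have := gap_le E ∅ ∅ (Finset.disjoint_empty_left ∅)
  simp only [Finset.notMem_empty, and_false, false_and] at this
  calc (0:ℝ) ≤ |((E.filter fun e => e.1 ∈ (∅ : Finset V) ∧ e.2 ∈ (∅ : Finset V)).card : ℝ) / (E.card : ℝ) -
      (((∅ : Finset V).card : ℝ) * (((∅ : Finset V)).card : ℝ)) / ((Fintype.card V : ℝ) * ((Fintype.card V : ℝ) - 1))| := abs_nonneg _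
    _ ≤ mixingGap E := gap_le E ∅ ∅ (Finset.disjoint_empty_left ∅)

lemma card_filter_mem_not_mem (S : Finset V) (a b : V) (ha : a ∈ S) (hb : b ∈ S) (hab : a ≠ b) :
    (S.powerset.filter fun T => a ∈ T ∧ b ∉ T).card = 2 ^ (S.card - 2) := by
  have hcard : (((S.erase a).erase b).powerset).card = 2 ^ (S.card - 2) := by
    rw [Finset.card_powerset, Finset.card_erase_of_mem (Finset.mem_erase.mpr ⟨Ne.symm hab, hb⟩),
      Finset.card_erase_of_mem ha]
    congr 1
  rw [← hcard]
  refine Finset.card_bij' (fun T _ => T.erase a) (fun R _ => insert a R) ?_ ?_ ?_ ?_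
  · intro T hT
    simp only [Finset.mem_filter, Finset.mem_powerset] at hT
    obtain ⟨hTS, haT, hbT⟩ := hT
    rw [Finset.mem_powerset]
    intro v hv
    obtain ⟨hva, hvT⟩ := Finset.mem_erase.mp hv
    exact Finset.mem_erase.mpr ⟨fun h => hbT (h ▸ hvT), Finset.mem_erase.mpr ⟨hva, hTS hvT⟩⟩
  · intro R hR
    rw [Finset.mem_powerset] at hR
    simp only [Finset.mem_filter, Finset.mem_powerset]
    refine ⟨?_, Finset.mem_insert_self a R, ?_⟩
    · intro v hv
      rcases Finset.mem_insert.mp hv with rfl | hvR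
      · exact ha
      · exact Finset.mem_of_mem_erase (Finset.mem_of_mem_erase (hR hvR))
    · intro hmem
      rcases Finset.mem_insert.mp hmem with h | hbR
      · exact hab h.symm
      · exact (Finset.mem_erase.mp (hR hbR)).1 rfl
  · intro T hT
    simp only [Finset.mem_filter] at hT
    exact Finset.insert_erase hT.2.1
  · intro R hR
    rw [Finset.mem_powerset] at hR
    refine Finset.erase_insert fun haR => ?_
    exact (Finset.mem_erase.mp (Finset.mem_of_mem_erase (hR haR))).1 rfl

end Gap

section Count
variable {V : Type*} [Fintype V] [DecidableEq V]

lemma sum_cut_nat (E : Finset (V × V)) (hloop : ∀ e ∈ E, e.1 ≠ e.2) (S : Finset V) :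
    ∑ T ∈ S.powerset, (E.filter fun e => e.1 ∈ T ∧ e.2 ∈ S \ T).card
      = 2 ^ (S.card - 2) * (E.filter fun e => e.1 ∈ S ∧ e.2 ∈ S).card := by
  have lhs : ∑ T ∈ S.powerset, (E.filter fun e => e.1 ∈ T ∧ e.2 ∈ S \ T).card
      = ∑ e ∈ E, ∑ T ∈ S.powerset, (if e.1 ∈ T ∧ e.2 ∈ S \ T then 1 else 0) := by
    rw [Finset.sum_comm]
    exact Finset.sum_congr rfl fun T _ => by rw [Finset.card_filter]
  rw [lhs, mul_comm, Finset.card_filter, Finset.sum_mul]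
  refine Finset.sum_congr rfl fun e he => ?_
  by_cases hS : e.1 ∈ S ∧ e.2 ∈ S
  · rw [if_pos hS, one_mul]
    have hcong : (S.powerset.filter fun T => e.1 ∈ T ∧ e.2 ∈ S \ T)
        = S.powerset.filter fun T => e.1 ∈ T ∧ e.2 ∉ T := by
      refine Finset.filter_congr fun T hT => ?_
      rw [Finset.mem_sdiff]
      tauto
    rw [← Finset.card_filter, hcong, card_filter_mem_not_mem S e.1 e.2 hS.1 hS.2 (hloop e he)]
  · rw [if_neg hS, zero_mul]
    refine Finset.sum_eq_zero fun T hT => ?_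
    rw [Finset.mem_powerset] at hT
    rw [if_neg]
    rintro ⟨h1, h2⟩
    exact hS ⟨hT h1, (Finset.mem_sdiff.mp h2).1⟩

lemma sum_split_nat (S : Finset V) :
    ∑ T ∈ S.powerset, T.card * (S \ T).card = 2 ^ (S.card - 2) * (S.card * S.card - S.card) := by
  have hprod : ∀ T ∈ S.powerset, T.card * (S \ T).card
      = ∑ p ∈ S ×ˢ S, (if p.1 ∈ T ∧ p.2 ∈ S \ T then 1 else 0) := by
    intro T hT
    rw [Finset.mem_powerset] at hT
    rw [← Finset.card_filter, ← Finset.card_product]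
    congr 1
    ext p
    simp only [Finset.mem_filter, Finset.mem_product, Finset.mem_sdiff]
    constructor
    · rintro ⟨h1, h2⟩
      exact ⟨⟨hT h1, h2.1⟩, h1, h2⟩
    · rintro ⟨-, h1, h2⟩
      exact ⟨h1, h2⟩
  rw [Finset.sum_congr rfl hprod, Finset.sum_comm]
  have inner : ∀ p ∈ S ×ˢ S, ∑ T ∈ S.powerset, (if p.1 ∈ T ∧ p.2 ∈ S \ T then 1 else 0)
      = if p.1 ≠ p.2 then 2 ^ (S.card - 2) else 0 := by
    intro p hp
    rw [Finset.mem_product] at hp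
    by_cases hne : p.1 ≠ p.2
    · rw [if_pos hne]
      have hcong : (S.powerset.filter fun T => p.1 ∈ T ∧ p.2 ∈ S \ T)
          = S.powerset.filter fun T => p.1 ∈ T ∧ p.2 ∉ T := by
        refine Finset.filter_congr fun T hT => ?_
        rw [Finset.mem_sdiff]
        tauto
      rw [← Finset.card_filter, hcong, card_filter_mem_not_mem S p.1 p.2 hp.1 hp.2 hne]
    · rw [if_neg hne]
      push_neg at hne
      refine Finset.sum_eq_zero fun T hT => ?_
      rw [if_neg]
      rintro ⟨h1, h2⟩
      exact (Finset.mem_sdiff.mp h2).2 (hne ▸ h1)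
  rw [Finset.sum_congr rfl inner, Finset.sum_ite, Finset.sum_const, Finset.sum_const,
    smul_zero, add_zero, smul_eq_mul, mul_comm]
  congr 1
  have hsplit := Finset.card_filter_add_card_filter_not
    (s := S ×ˢ S) (p := fun p => p.1 ≠ p.2)
  have hdiag : ((S ×ˢ S).filter fun p => ¬p.1 ≠ p.2).card = S.card := by
    have himg : ((S ×ˢ S).filter fun p => ¬p.1 ≠ p.2) = S.image fun a => (a, a) := by
      ext p
      simp only [Finset.mem_filter, Finset.mem_product, Finset.mem_image, not_not]
      constructor
      · rintro ⟨⟨h1, -⟩, h2⟩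
        exact ⟨p.1, h1, Prod.ext rfl h2⟩
      · rintro ⟨a, ha, rfl⟩
        exact ⟨⟨ha, ha⟩, rfl⟩
    rw [himg, Finset.card_image_of_injective _ fun a b h => (Prod.ext_iff.mp h).1]
  rw [Finset.card_product] at hsplit
  omega

end Count

section GapDiag
variable {V : Type*} [Fintype V] [DecidableEq V]

lemma gap_diag (E : Finset (V × V)) (hloop : ∀ e ∈ E, e.1 ≠ e.2) (S : Finset V) :
    |((E.filter fun e => e.1 ∈ S ∧ e.2 ∈ S).card : ℝ) / (E.card : ℝ) -
      ((S.card : ℝ) * ((S.card : ℝ) - 1)) / ((Fintype.card V : ℝ) * ((Fintype.card V : ℝ) - 1))|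
      ≤ 4 * mixingGap E := by
  rcases le_or_gt S.card 1 with hs | hs
  · have hempty : (E.filter fun e => e.1 ∈ S ∧ e.2 ∈ S) = ∅ := by
      rw [Finset.filter_eq_empty_iff]
      rintro e he ⟨h1, h2⟩
      have : ({e.1, e.2} : Finset V) ⊆ S := by
        intro v hv
        rcases Finset.mem_insert.mp hv with rfl | hv
        · exact h1
        · rw [Finset.mem_singleton.mp hv]; exact h2
      have hcard2 : ({e.1, e.2} : Finset V).card = 2 := Finset.card_pair (hloop e he)
      have := Finset.card_le_card this
      omega
    have hS0 : (S.card : ℝ) * ((S.card : ℝ) - 1) = 0 := by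
      interval_cases h : S.card <;> simp
    rw [hempty, hS0]
    simp only [Finset.card_empty, Nat.cast_zero, zero_div, sub_zero, abs_zero]
    have := mixingGap_nonneg E
    linarith
  · set s := S.card with hsdef
    have h2s : 2 ≤ s := hs
    have hpow : (0:ℝ) < 2 ^ (s - 2) := by positivity
    have key1 : ∑ T ∈ S.powerset, ((E.filter fun e => e.1 ∈ T ∧ e.2 ∈ S \ T).card : ℝ)
        = 2 ^ (s - 2) * ((E.filter fun e => e.1 ∈ S ∧ e.2 ∈ S).card : ℝ) := by
      rw [← Nat.cast_sum]
      rw [sum_cut_nat E hloop S]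
      push_cast
      ring
    have key2 : ∑ T ∈ S.powerset, (T.card : ℝ) * (((S \ T).card : ℝ))
        = 2 ^ (s - 2) * ((s : ℝ) * (s : ℝ) - (s : ℝ)) := by
      have := sum_split_nat S
      have hle : S.card ≤ S.card * S.card := Nat.le_mul_of_pos_left _ (by omega)
      calc ∑ T ∈ S.powerset, (T.card : ℝ) * (((S \ T).card : ℝ))
          = ((∑ T ∈ S.powerset, T.card * (S \ T).card : ℕ) : ℝ) := by
            rw [Nat.cast_sum]; exact Finset.sum_congr rfl fun T _ => by push_cast; ring
        _ = ((2 ^ (S.card - 2) * (S.card * S.card - S.card) : ℕ) : ℝ) := by rw [this]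
        _ = 2 ^ (s - 2) * ((s : ℝ) * (s : ℝ) - (s : ℝ)) := by
            rw [Nat.cast_mul, Nat.cast_sub hle]
            push_cast
            ring
    set n := (Fintype.card V : ℝ)
    set m := (E.card : ℝ)
    set D := ((E.filter fun e => e.1 ∈ S ∧ e.2 ∈ S).card : ℝ) / m -
      ((s : ℝ) * ((s : ℝ) - 1)) / (n * (n - 1)) with hD
    have hsum : (2 ^ (s - 2) : ℝ) * D
        = ∑ T ∈ S.powerset, (((E.filter fun e => e.1 ∈ T ∧ e.2 ∈ S \ T).card : ℝ) / m
            - ((T.card : ℝ) * (((S \ T).card : ℝ))) / (n * (n - 1))) := by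
      rw [Finset.sum_sub_distrib, ← Finset.sum_div, ← Finset.sum_div, key1, key2, hD]
      ring
    have habs : (2 ^ (s - 2) : ℝ) * |D| ≤ 2 ^ s * mixingGap E := by
      calc (2 ^ (s - 2) : ℝ) * |D| = |(2 ^ (s - 2) : ℝ) * D| := by
            rw [abs_mul, abs_of_pos hpow]
        _ ≤ ∑ T ∈ S.powerset, |((E.filter fun e => e.1 ∈ T ∧ e.2 ∈ S \ T).card : ℝ) / m
            - ((T.card : ℝ) * (((S \ T).card : ℝ))) / (n * (n - 1))| := by
            rw [hsum]; exact Finset.abs_sum_le_sum_abs _ _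
        _ ≤ ∑ T ∈ S.powerset, mixingGap E :=
            Finset.sum_le_sum fun T _ => gap_le E T (S \ T) Finset.disjoint_sdiff
        _ = 2 ^ s * mixingGap E := by
            rw [Finset.sum_const, Finset.card_powerset, nsmul_eq_mul]
            push_cast
            ring
    have hfour : (2 ^ s : ℝ) = 2 ^ (s - 2) * 4 := by
      rw [show s = s - 2 + 2 by omega]
      rw [pow_add]
      norm_num
    rw [hfour] at habs
    have := (mul_le_mul_iff_of_pos_left hpow).mp (by linarith : (2 ^ (s - 2) : ℝ) * |D| ≤ 2 ^ (s-2) * (4 * mixingGap E))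
    exact this

end GapDiag

section Boundary
variable {V A : Type*} [Fintype V] [DecidableEq V] [Fintype A] [DecidableEq A]

lemma aux_ratio (n s u : ℝ) (hn : 2 ≤ n) (hs : 0 ≤ s) (hsn : s ≤ n) (hu : 0 ≤ u) (hun : u ≤ n) :
    |s * u / (n * (n - 1)) - s / n * (u / n)| ≤ 1 / (n - 1) := by
  have hn0 : (0:ℝ) < n := by linarith
  have hn1 : (0:ℝ) < n - 1 := by linarith
  have key : s * u / (n * (n - 1)) - s / n * (u / n) = s * u / (n ^ 2 * (n - 1)) := by
    field_simp
    ring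
  rw [key, abs_of_nonneg (by positivity), div_le_div_iff₀ (by positivity) hn1]
  nlinarith [mul_le_mul hsn hun hu (le_of_lt hn0)]

lemma aux_ratio_diag (n s : ℝ) (hn : 2 ≤ n) (hs : 0 ≤ s) (hsn : s ≤ n) :
    |s * (s - 1) / (n * (n - 1)) - s / n * (s / n)| ≤ 1 / (n - 1) := by
  have hn0 : (0:ℝ) < n := by linarith
  have hn1 : (0:ℝ) < n - 1 := by linarith
  have key : s * (s - 1) / (n * (n - 1)) - s / n * (s / n) = s * (s - n) / (n ^ 2 * (n - 1)) := by
    field_simp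
    ring
  rw [key, abs_le]
  constructor
  · rw [neg_le, show -(s * (s - n) / (n ^ 2 * (n - 1))) = s * (n - s) / (n ^ 2 * (n - 1)) by ring,
      div_le_div_iff₀ (by positivity) hn1]
    have hq : s * (n - s) ≤ n * n := by nlinarith
    nlinarith [mul_le_mul_of_nonneg_right hq hn1.le]
  · have hnum : s * (s - n) ≤ 0 := by nlinarith
    exact le_trans (div_nonpos_of_nonpos_of_nonneg hnum (by positivity)) (by positivity)

lemma confType_nonneg (x : V → A) (i : A) : 0 ≤ confType x i := by
  unfold confType
  positivity

lemma confType_le_one (x : V → A) (i : A) : confType x i ≤ 1 := by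
  unfold confType
  rcases Nat.eq_zero_or_pos (Fintype.card V) with h | h
  · rw [h]; simp
  · rw [div_le_one (by exact_mod_cast h)]
    exact_mod_cast Finset.card_le_card (Finset.subset_univ _)

lemma sum_confType (hn : 0 < Fintype.card V) (x : V → A) : ∑ i, confType x i = 1 := by
  unfold confType
  rw [← Finset.sum_div]
  rw [show ∑ i : A, ((Finset.univ.filter fun v => x v = i).card : ℝ) = (Fintype.card V : ℝ) by
    have h1 : ∀ i ∈ (Finset.univ : Finset A),
        ((Finset.univ.filter fun v => x v = i).card : ℝ)
          = ∑ _v ∈ Finset.univ.filter fun v => x v = i, (1:ℝ) := by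
      intro i _
      rw [Finset.sum_const, nsmul_eq_mul, mul_one]
    rw [Finset.sum_congr rfl h1, Finset.sum_fiberwise Finset.univ x (fun _ => (1:ℝ)),
      Finset.sum_const, nsmul_eq_mul, mul_one, Finset.card_univ]]
  rw [div_self (by exact_mod_cast hn.ne')]

lemma boundary_filter_eq (E : Finset (V × V)) (x : V → A) (j ℓ : A) :
    (E.filter fun e => x e.1 = j ∧ x e.2 = ℓ)
      = E.filter fun e => e.1 ∈ (Finset.univ.filter fun v => x v = j)
          ∧ e.2 ∈ (Finset.univ.filter fun v => x v = ℓ) := by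
  refine Finset.filter_congr fun e _ => ?_
  simp

lemma boundary_close (E : Finset (V × V)) (hloop : ∀ e ∈ E, e.1 ≠ e.2)
    (hn : 2 ≤ Fintype.card V) (x : V → A) (j ℓ : A) :
    |boundary E x j ℓ - confType x j * confType x ℓ|
      ≤ 4 * mixingGap E + 1 / ((Fintype.card V : ℝ) - 1) := by
  set n := (Fintype.card V : ℝ) with hndef
  have hn2 : (2:ℝ) ≤ n := by rw [hndef]; exact_mod_cast hn
  set S := Finset.univ.filter fun v => x v = j with hSdef
  set U := Finset.univ.filter fun v => x v = ℓ with hUdef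
  have hScard : (S.card : ℝ) ≤ n := by
    rw [hndef]
    exact_mod_cast Finset.card_le_card (Finset.subset_univ _)
  have hUcard : (U.card : ℝ) ≤ n := by
    rw [hndef]
    exact_mod_cast Finset.card_le_card (Finset.subset_univ _)
  have hbd : boundary E x j ℓ = ((E.filter fun e => e.1 ∈ S ∧ e.2 ∈ U).card : ℝ) / (E.card : ℝ) := by
    unfold boundary
    rw [boundary_filter_eq]
  have hct : confType x j * confType x ℓ = (S.card : ℝ) / n * ((U.card : ℝ) / n) := rfl
  rcases eq_or_ne j ℓ with rfl | hjl
  · -- diagonal case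
    have hUS : U = S := by rw [hSdef, hUdef]
    rw [hbd, hct, hUS]
    calc |((E.filter fun e => e.1 ∈ S ∧ e.2 ∈ S).card : ℝ) / (E.card : ℝ) - (S.card : ℝ) / n * ((S.card : ℝ) / n)|
        ≤ |((E.filter fun e => e.1 ∈ S ∧ e.2 ∈ S).card : ℝ) / (E.card : ℝ) -
            ((S.card : ℝ) * ((S.card : ℝ) - 1)) / (n * (n - 1))|
          + |((S.card : ℝ) * ((S.card : ℝ) - 1)) / (n * (n - 1)) - (S.card : ℝ) / n * ((S.card : ℝ) / n)| := by
          exact abs_sub_le _ _ _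
      _ ≤ 4 * mixingGap E + 1 / (n - 1) := by
          gcongr
          · exact gap_diag E hloop S
          · exact aux_ratio_diag n _ hn2 (by positivity) hScard
  · -- off-diagonal case
    have hdisj : Disjoint S U := by
      rw [Finset.disjoint_left]
      intro v hv hv'
      rw [hSdef, Finset.mem_filter] at hv
      rw [hUdef, Finset.mem_filter] at hv'
      exact hjl (hv.2 ▸ hv'.2 ▸ rfl)
    rw [hbd, hct]
    calc |((E.filter fun e => e.1 ∈ S ∧ e.2 ∈ U).card : ℝ) / (E.card : ℝ) - (S.card : ℝ) / n * ((U.card : ℝ) / n)|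
        ≤ |((E.filter fun e => e.1 ∈ S ∧ e.2 ∈ U).card : ℝ) / (E.card : ℝ) -
            ((S.card : ℝ) * (U.card : ℝ)) / (n * (n - 1))|
          + |((S.card : ℝ) * (U.card : ℝ)) / (n * (n - 1)) - (S.card : ℝ) / n * ((U.card : ℝ) / n)| := by
          exact abs_sub_le _ _ _
      _ ≤ mixingGap E + 1 / (n - 1) := by
          gcongr
          · exact gap_le E S U hdisj
          · exact aux_ratio n _ _ hn2 (by positivity) hScard (by positivity) hUcard
      _ ≤ 4 * mixingGap E + 1 / (n - 1) := by
          have := mixingGap_nonneg E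
          linarith

end Boundary

section DriftClose
variable {V A : Type*} [Fintype V] [DecidableEq V] [Fintype A] [DecidableEq A]

lemma drift_close (E : Finset (V × V)) (ρ : ℝ) (P : A → A → ℝ) (φ : A → A → A → ℝ)
    (hρ0 : 0 ≤ ρ) (hρ1 : ρ ≤ 1)
    (hP : ∀ a, ∑ b, P a b = 1)
    (hφnn : ∀ a b ℓ, 0 ≤ φ a b ℓ) (hφ : ∀ a ℓ, ∑ b, φ a b ℓ = 1)
    (hm : E.Nonempty) (hloop : ∀ e ∈ E, e.1 ≠ e.2)
    (hn : 2 ≤ Fintype.card V) (hA : 1 ≤ Fintype.card A) (x : V → A) (i : A) :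
    |meanDrift E ρ P φ x i - limitDrift ρ P φ (confType x) i|
      ≤ 2 * (Fintype.card A : ℝ) ^ 2 * (4 * mixingGap E + 1 / ((Fintype.card V : ℝ) - 1)) := by
  have hn0 : 0 < Fintype.card V := by omega
  set θ := confType x with hθ
  set ξ := boundary E x with hξ
  set ε := 4 * mixingGap E + 1 / ((Fintype.card V : ℝ) - 1) with hε
  have hεnn : 0 ≤ ε := by
    have h1 := mixingGap_nonneg E
    have h2 : (0:ℝ) ≤ 1 / ((Fintype.card V : ℝ) - 1) := by
      have h : (2:ℝ) ≤ (Fintype.card V : ℝ) := by exact_mod_cast hn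
      have h' : (0:ℝ) < (Fintype.card V : ℝ) - 1 := by linarith
      positivity
    rw [hε]; linarith
  have hclose : ∀ j ℓ, |ξ j ℓ - θ j * θ ℓ| ≤ ε := fun j ℓ => boundary_close E hloop hn x j ℓ
  have hφle : ∀ j ℓ, φ j i ℓ ≤ 1 := by
    intro j ℓ
    calc φ j i ℓ ≤ ∑ b, φ j b ℓ :=
          Finset.single_le_sum (fun b _ => hφnn j b ℓ) (Finset.mem_univ i)
      _ = 1 := hφ j ℓ
  have hθsum : ∑ ℓ, θ i * θ ℓ = θ i := by
    rw [← Finset.mul_sum, sum_confType hn0 x, mul_one]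
  have hmd : meanDrift E ρ P φ x i =
      (1 - ρ) * ((∑ j, P j i * θ j) - θ i)
        + ρ * ((∑ ℓ, ∑ j, ξ j ℓ * φ j i ℓ) - ∑ ℓ, ξ i ℓ) := by
    unfold meanDrift
    exact meanDrift_formula E ρ P φ hn0 hm hP hφ x i
  have hld : limitDrift ρ P φ θ i =
      ((1 - ρ) * ∑ j, P j i * θ j) + (ρ * ∑ ℓ, ∑ j, (θ j * θ ℓ) * φ j i ℓ) - θ i := by
    unfold limitDrift
    have hq : ∑ ℓ, θ ℓ * ∑ j, φ j i ℓ * θ j = ∑ ℓ, ∑ j, (θ j * θ ℓ) * φ j i ℓ := by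
      refine Finset.sum_congr rfl fun ℓ _ => ?_
      rw [Finset.mul_sum]
      exact Finset.sum_congr rfl fun j _ => by ring
    rw [hq]
  have hdiff : meanDrift E ρ P φ x i - limitDrift ρ P φ θ i =
      ρ * ((∑ ℓ, ∑ j, (ξ j ℓ - θ j * θ ℓ) * φ j i ℓ) - ∑ ℓ, (ξ i ℓ - θ i * θ ℓ)) := by
    rw [hmd, hld]
    rw [show (∑ ℓ, ∑ j, (ξ j ℓ - θ j * θ ℓ) * φ j i ℓ)
        = (∑ ℓ, ∑ j, ξ j ℓ * φ j i ℓ) - ∑ ℓ, ∑ j, (θ j * θ ℓ) * φ j i ℓ from by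
      rw [← Finset.sum_sub_distrib]
      refine Finset.sum_congr rfl fun ℓ _ => ?_
      rw [← Finset.sum_sub_distrib]
      exact Finset.sum_congr rfl fun j _ => by ring]
    rw [Finset.sum_sub_distrib, hθsum]
    ring
  have h1 : |∑ ℓ, ∑ j, (ξ j ℓ - θ j * θ ℓ) * φ j i ℓ| ≤ (Fintype.card A : ℝ) ^ 2 * ε := by
    calc |∑ ℓ, ∑ j, (ξ j ℓ - θ j * θ ℓ) * φ j i ℓ|
        ≤ ∑ ℓ, |∑ j, (ξ j ℓ - θ j * θ ℓ) * φ j i ℓ| := Finset.abs_sum_le_sum_abs _ _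
      _ ≤ ∑ ℓ : A, ∑ j : A, |(ξ j ℓ - θ j * θ ℓ) * φ j i ℓ| :=
          Finset.sum_le_sum fun ℓ _ => Finset.abs_sum_le_sum_abs _ _
      _ ≤ ∑ ℓ : A, ∑ j : A, ε := by
          refine Finset.sum_le_sum fun ℓ _ => Finset.sum_le_sum fun j _ => ?_
          rw [abs_mul, abs_of_nonneg (hφnn j i ℓ)]
          calc |ξ j ℓ - θ j * θ ℓ| * φ j i ℓ ≤ ε * 1 :=
                mul_le_mul (hclose j ℓ) (hφle j ℓ) (hφnn j i ℓ) hεnn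
            _ = ε := mul_one ε
      _ = (Fintype.card A : ℝ) ^ 2 * ε := by
          rw [Finset.sum_const, Finset.sum_const, Finset.card_univ, nsmul_eq_mul, nsmul_eq_mul]
          ring
  have h2 : |∑ ℓ, (ξ i ℓ - θ i * θ ℓ)| ≤ (Fintype.card A : ℝ) * ε := by
    calc |∑ ℓ, (ξ i ℓ - θ i * θ ℓ)| ≤ ∑ ℓ, |ξ i ℓ - θ i * θ ℓ| := Finset.abs_sum_le_sum_abs _ _
      _ ≤ ∑ ℓ : A, ε := Finset.sum_le_sum fun ℓ _ => hclose i ℓ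
      _ = (Fintype.card A : ℝ) * ε := by
          rw [Finset.sum_const, Finset.card_univ, nsmul_eq_mul]
  have hcA : (1:ℝ) ≤ (Fintype.card A : ℝ) := by exact_mod_cast hA
  calc |meanDrift E ρ P φ x i - limitDrift ρ P φ θ i|
      = ρ * |(∑ ℓ, ∑ j, (ξ j ℓ - θ j * θ ℓ) * φ j i ℓ) - ∑ ℓ, (ξ i ℓ - θ i * θ ℓ)| := by
        rw [hdiff, abs_mul, abs_of_nonneg hρ0]
    _ ≤ 1 * ((Fintype.card A : ℝ) ^ 2 * ε + (Fintype.card A : ℝ) * ε) := by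
        refine mul_le_mul hρ1 ?_ (abs_nonneg _) zero_le_one
        calc |(∑ ℓ, ∑ j, (ξ j ℓ - θ j * θ ℓ) * φ j i ℓ) - ∑ ℓ, (ξ i ℓ - θ i * θ ℓ)|
            ≤ |∑ ℓ, ∑ j, (ξ j ℓ - θ j * θ ℓ) * φ j i ℓ| + |∑ ℓ, (ξ i ℓ - θ i * θ ℓ)| :=
              abs_sub _ _
          _ ≤ (Fintype.card A : ℝ) ^ 2 * ε + (Fintype.card A : ℝ) * ε := add_le_add h1 h2
    _ ≤ 2 * (Fintype.card A : ℝ) ^ 2 * ε := by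
        have hc2 : (Fintype.card A : ℝ) ≤ (Fintype.card A : ℝ) ^ 2 := by nlinarith
        nlinarith [mul_le_mul_of_nonneg_right hc2 hεnn]
end DriftClose

section Taylor
variable {A : Type*} [Fintype A]

lemma norm_sub_le_of_mem_segment' {a b z : A → ℝ} (hz : z ∈ segment ℝ a b) :
    ‖z - a‖ ≤ ‖b - a‖ := by
  obtain ⟨u, v, hu, hv, huv, rfl⟩ := hz
  have : u • a + v • b - a = v • (b - a) := by
    have hu1 : u = 1 - v := by linarith
    rw [hu1]
    module
  rw [this, norm_smul, Real.norm_eq_abs, abs_of_nonneg hv]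
  nlinarith [norm_nonneg (b - a)]

lemma exists_taylor_bound {f : (A → ℝ) → ℝ} (hf : ContDiff ℝ 2 f) :
    ∃ L M : ℝ, 0 ≤ L ∧ 0 ≤ M ∧
      (∀ a : A → ℝ, ‖a‖ ≤ 1 → ‖fderiv ℝ f a‖ ≤ L) ∧
      (∀ a b : A → ℝ, ‖a‖ ≤ 1 → ‖b‖ ≤ 1 →
        |f b - f a - fderiv ℝ f a (b - a)| ≤ M * ‖b - a‖ ^ 2) := by
  set g := fderiv ℝ f with hg
  have hg1 : ContDiff ℝ 1 g := hf.fderiv_right (by norm_num)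
  have hgc : Continuous g := hg1.continuous
  have hg'c : Continuous (fderiv ℝ g) := hg1.continuous_fderiv one_ne_zero
  obtain ⟨L₀, hL₀⟩ := (isCompact_closedBall (0 : A → ℝ) 1).exists_bound_of_continuousOn
    hgc.continuousOn
  obtain ⟨M₀, hM₀⟩ := (isCompact_closedBall (0 : A → ℝ) 1).exists_bound_of_continuousOn
    (hg1.continuous_fderiv one_ne_zero).continuousOn
  refine ⟨max L₀ 0, max M₀ 0, le_max_right _ _, le_max_right _ _, ?_, ?_⟩
  · intro a ha
    exact le_trans (hL₀ a (Metric.mem_closedBall.mpr (by simpa using ha)))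
      (le_max_left _ _)
  · intro a b ha hb
    set M := max M₀ 0 with hM
    have hball : ∀ z : A → ℝ, ‖z‖ ≤ 1 → z ∈ Metric.closedBall (0 : A → ℝ) 1 := by
      intro z hz
      rw [Metric.mem_closedBall, dist_zero_right]
      exact hz
    have haK := hball a ha
    have hbK := hball b hb
    -- g is M-Lipschitz on the closed ball
    have hLip : ∀ z ∈ Metric.closedBall (0 : A → ℝ) 1, ∀ w ∈ Metric.closedBall (0 : A → ℝ) 1,
        ‖g z - g w‖ ≤ M * ‖z - w‖ := by
      intro z hz w hw
      exact (convex_closedBall (0 : A → ℝ) 1).norm_image_sub_le_of_norm_fderiv_le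
        (fun t _ => (hg1.differentiable one_ne_zero).differentiableAt)
        (fun t ht => le_trans (hM₀ t ht) (le_max_left _ _))
        hw hz
    -- now a mean value estimate on the segment from a to b
    have hseg : segment ℝ a b ⊆ Metric.closedBall (0 : A → ℝ) 1 :=
      (convex_closedBall (0 : A → ℝ) 1).segment_subset haK hbK
    have hF : ∀ z ∈ segment ℝ a b,
        HasFDerivWithinAt (fun z => f z - g a z) (g z - g a) (segment ℝ a b) z := by
      intro z _
      exact (((hf.differentiable (by norm_num)).differentiableAt.hasFDerivAt).sub
        ((g a).hasFDerivAt)).hasFDerivWithinAt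
    have hbound : ∀ z ∈ segment ℝ a b, ‖g z - g a‖ ≤ M * ‖b - a‖ := by
      intro z hz
      calc ‖g z - g a‖ ≤ M * ‖z - a‖ := hLip z (hseg hz) a haK
        _ ≤ M * ‖b - a‖ := by
            have := norm_sub_le_of_mem_segment' hz
            have hM0 : (0:ℝ) ≤ M := le_max_right _ _
            nlinarith
    have key := (convex_segment a b).norm_image_sub_le_of_norm_hasFDerivWithin_le
      hF hbound (left_mem_segment ℝ a b) (right_mem_segment ℝ a b)
    have heq : (fun z => f z - g a z) b - (fun z => f z - g a z) a
        = f b - f a - g a (b - a) := by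
      simp only
      rw [map_sub]
      ring
    rw [heq] at key
    calc |f b - f a - g a (b - a)| = ‖f b - f a - g a (b - a)‖ := (Real.norm_eq_abs _).symm
      _ ≤ M * ‖b - a‖ * ‖b - a‖ := key
      _ = M * ‖b - a‖ ^ 2 := by ring

end Taylor

section Rows
variable {V A : Type*} [Fintype V] [DecidableEq V] [Fintype A] [DecidableEq A]
  (E : Finset (V × V)) (ρ : ℝ) (P : A → A → ℝ) (φ : A → A → A → ℝ)

lemma toff_nonneg (hρ0 : 0 ≤ ρ) (hρ1 : ρ ≤ 1) (hPnn : ∀ a b, 0 ≤ P a b)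
    (hφnn : ∀ a b ℓ, 0 ≤ φ a b ℓ) (x y : V → A) : 0 ≤ Toff E ρ P φ x y := by
  unfold Toff
  split_ifs
  · refine Finset.sum_nonneg fun u _ => add_nonneg ?_ ?_
    · have h1 : (0:ℝ) ≤ 1 - ρ := by linarith
      have h2 : (0:ℝ) ≤ 1 / (Fintype.card V : ℝ) := by positivity
      exact mul_nonneg (mul_nonneg h1 h2) (hPnn _ _)
    · exact mul_nonneg (by positivity) (Finset.sum_nonneg fun e _ => hφnn _ _ _)
  · exact le_refl 0

lemma sum_toff_le_one (hρ0 : 0 ≤ ρ) (hρ1 : ρ ≤ 1) (hPnn : ∀ a b, 0 ≤ P a b)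
    (hP : ∀ a, ∑ b, P a b = 1) (hφnn : ∀ a b ℓ, 0 ≤ φ a b ℓ) (hφ : ∀ a ℓ, ∑ b, φ a b ℓ = 1)
    (hn : 0 < Fintype.card V) (hm : E.Nonempty) (x : V → A) :
    ∑ z : V → A, Toff E ρ P φ x z ≤ 1 := by
  have hn' : (Fintype.card V : ℝ) ≠ 0 := (Nat.cast_pos.mpr hn).ne'
  have hm' : (E.card : ℝ) ≠ 0 := (Nat.cast_pos.mpr (Finset.card_pos.mpr hm)).ne'
  have h0 := sum_toff_mul E ρ P φ x (fun _ => 1)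
  simp only [mul_one] at h0
  rw [h0]
  have hterm_nn : ∀ p : V × A, 0 ≤ ((1 - ρ) * (1 / (Fintype.card V : ℝ)) * P (x p.1) p.2
      + (ρ / (E.card : ℝ)) * ∑ e ∈ E.filter fun e => e.1 = p.1, φ (x p.1) p.2 (x e.2)) := by
    intro p
    refine add_nonneg ?_ ?_
    · have h1 : (0:ℝ) ≤ 1 - ρ := by linarith
      have h2 : (0:ℝ) ≤ 1 / (Fintype.card V : ℝ) := by positivity
      exact mul_nonneg (mul_nonneg h1 h2) (hPnn _ _)
    · exact mul_nonneg (by positivity) (Finset.sum_nonneg fun e _ => hφnn _ _ _)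
  calc ∑ p ∈ (Finset.univ ×ˢ Finset.univ : Finset (V × A)).filter fun p => p.2 ≠ x p.1,
        Toff E ρ P φ x (Function.update x p.1 p.2)
      = ∑ p ∈ (Finset.univ ×ˢ Finset.univ : Finset (V × A)).filter fun p => p.2 ≠ x p.1,
          ((1 - ρ) * (1 / (Fintype.card V : ℝ)) * P (x p.1) p.2
            + (ρ / (E.card : ℝ)) * ∑ e ∈ E.filter fun e => e.1 = p.1, φ (x p.1) p.2 (x e.2)) := by
        refine Finset.sum_congr rfl fun p hp => ?_
        simp only [Finset.mem_filter] at hp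
        exact toff_update E ρ P φ hp.2
    _ ≤ ∑ p ∈ (Finset.univ ×ˢ Finset.univ : Finset (V × A)),
          ((1 - ρ) * (1 / (Fintype.card V : ℝ)) * P (x p.1) p.2
            + (ρ / (E.card : ℝ)) * ∑ e ∈ E.filter fun e => e.1 = p.1, φ (x p.1) p.2 (x e.2)) :=
        Finset.sum_le_sum_of_subset_of_nonneg (Finset.filter_subset _ _)
          (fun p _ _ => hterm_nn p)
    _ = 1 := by
        rw [Finset.sum_product, Finset.sum_congr rfl fun u (_ : u ∈ Finset.univ) => Finset.sum_add_distrib]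
        rw [Finset.sum_add_distrib]
        have hA1 : ∑ u : V, ∑ b : A, (1 - ρ) * (1 / (Fintype.card V : ℝ)) * P (x u) b = 1 - ρ := by
          rw [Finset.sum_congr rfl fun u (_ : u ∈ Finset.univ) => by
            rw [← Finset.mul_sum, hP (x u), mul_one]]
          rw [Finset.sum_const, Finset.card_univ, nsmul_eq_mul]
          field_simp
        have hA2 : ∑ u : V, ∑ b : A, (ρ / (E.card : ℝ)) * ∑ e ∈ E.filter fun e => e.1 = u, φ (x u) b (x e.2) = ρ := by
          have hu : ∀ u : V, ∑ b : A, (ρ / (E.card : ℝ)) * ∑ e ∈ E.filter fun e => e.1 = u, φ (x u) b (x e.2)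
              = (ρ / (E.card : ℝ)) * ((E.filter fun e => e.1 = u).card : ℝ) := by
            intro u
            rw [← Finset.mul_sum, Finset.sum_comm]
            rw [Finset.sum_congr rfl fun e (_ : e ∈ E.filter fun e => e.1 = u) => hφ (x u) (x e.2)]
            rw [Finset.sum_const, nsmul_eq_mul, mul_one]
          rw [Finset.sum_congr rfl fun u (_ : u ∈ Finset.univ) => hu u, ← Finset.mul_sum]
          have : ∑ u : V, ((E.filter fun e => e.1 = u).card : ℝ) = (E.card : ℝ) := by
            have h1 : ∀ u ∈ (Finset.univ : Finset V), ((E.filter fun e => e.1 = u).card : ℝ)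
                = ∑ _e ∈ E.filter fun e => e.1 = u, (1:ℝ) := by
              intro u _
              rw [Finset.sum_const, nsmul_eq_mul, mul_one]
            rw [Finset.sum_congr rfl h1, Finset.sum_fiberwise E Prod.fst (fun _ => (1:ℝ)),
              Finset.sum_const, nsmul_eq_mul, mul_one]
          rw [this]
          field_simp
        rw [hA1, hA2]
        ring

lemma sum_pinTrans_eq_one (x : V → A) : ∑ y : V → A, pinTrans E ρ P φ x y = 1 := by
  have h1 : ∑ y : V → A, (pinTrans E ρ P φ x y - Toff E ρ P φ x y)
      = 1 - ∑ z : V → A, Toff E ρ P φ x z := by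
    rw [Finset.sum_eq_single x]
    · rw [pinTrans, if_pos rfl, toff_self]
      ring
    · intro y _ hy
      rw [pinTrans, if_neg (Ne.symm hy)]
      ring
    · intro h
      exact absurd (Finset.mem_univ x) h
  have h2 := Finset.sum_sub_distrib (f := fun y => pinTrans E ρ P φ x y)
    (g := fun y => Toff E ρ P φ x y) (s := Finset.univ)
  rw [h2] at h1
  linarith

end Rows

section Key
variable {V A : Type*} [Fintype V] [DecidableEq V] [Fintype A] [DecidableEq A]

lemma confType_norm_le_one (x : V → A) : ‖(confType x : A → ℝ)‖ ≤ 1 := by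
  rw [pi_norm_le_iff_of_nonneg zero_le_one]
  intro i
  rw [Real.norm_eq_abs, abs_of_nonneg (confType_nonneg x i)]
  exact confType_le_one x i

lemma confType_update_norm (hn : 0 < Fintype.card V) (x : V → A) (u : V) (b : A) :
    ‖(confType (Function.update x u b) : A → ℝ) - confType x‖ ≤ 1 / (Fintype.card V : ℝ) := by
  have hn' : (0:ℝ) < (Fintype.card V : ℝ) := Nat.cast_pos.mpr hn
  rw [pi_norm_le_iff_of_nonneg (by positivity)]
  intro i
  rw [Pi.sub_apply, Real.norm_eq_abs, confType_update, abs_div,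
    abs_of_pos hn', div_le_div_iff_of_pos_right hn']
  split_ifs <;> norm_num

lemma key_ineq (E : Finset (V × V)) (ρ : ℝ) (P : A → A → ℝ) (φ : A → A → A → ℝ)
    (hρ0 : 0 ≤ ρ) (hρ1 : ρ ≤ 1)
    (hPnn : ∀ a b, 0 ≤ P a b) (hP : ∀ a, ∑ b, P a b = 1)
    (hφnn : ∀ a b ℓ, 0 ≤ φ a b ℓ) (hφ : ∀ a ℓ, ∑ b, φ a b ℓ = 1)
    (hm : E.Nonempty) (hloop : ∀ e ∈ E, e.1 ≠ e.2)
    (hn : 2 ≤ Fintype.card V) (hA : 1 ≤ Fintype.card A)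
    (μ : (V → A) → ℝ) (hμnn : ∀ x, 0 ≤ μ x) (hμ1 : ∑ x : V → A, μ x = 1)
    (hst : ∀ y : V → A, ∑ x : V → A, μ x * pinTrans E ρ P φ x y = μ y)
    (f : (A → ℝ) → ℝ) (L M z : ℝ) (hM0 : 0 ≤ M)
    (hLb : ∀ a : A → ℝ, ‖a‖ ≤ 1 → ‖fderiv ℝ f a‖ ≤ L)
    (hTay : ∀ a b : A → ℝ, ‖a‖ ≤ 1 → ‖b‖ ≤ 1 →
      |f b - f a - fderiv ℝ f a (b - a)| ≤ M * ‖b - a‖ ^ 2)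
    (h : (A → ℝ) → ℝ)
    (hLyap : ∀ θ : A → ℝ, inSimplex θ → fderiv ℝ f θ (limitDrift ρ P φ θ) ≤ -h θ + z) :
    ∑ x : V → A, μ x * h (confType x)
      ≤ z + L * (2 * (Fintype.card A : ℝ) ^ 2 * (4 * mixingGap E + 1 / ((Fintype.card V : ℝ) - 1)))
        + M / (Fintype.card V : ℝ) := by
  have hcard : 0 < Fintype.card V := by omega
  set n : ℝ := (Fintype.card V : ℝ) with hndef
  have hn0 : (0:ℝ) < n := by rw [hndef]; exact_mod_cast hcard
  set g : (A → ℝ) → (A → ℝ) →L[ℝ] ℝ := fderiv ℝ f with hgdef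
  set ε : ℝ := 2 * (Fintype.card A : ℝ) ^ 2 * (4 * mixingGap E + 1 / (n - 1)) with hεdef
  have hεnn : 0 ≤ ε := by
    have h1 := mixingGap_nonneg E
    have h2 : (2:ℝ) ≤ n := by rw [hndef]; exact_mod_cast hn
    have h3 : (0:ℝ) < n - 1 := by linarith
    rw [hεdef]
    positivity
  have hθS : ∀ x : V → A, inSimplex (confType x) :=
    fun x => ⟨confType_nonneg x, sum_confType hcard x⟩
  have hθn : ∀ x : V → A, ‖(confType x : A → ℝ)‖ ≤ 1 := confType_norm_le_one
  have hrow : ∀ x : V → A, ∑ y : V → A, pinTrans E ρ P φ x y = 1 :=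
    sum_pinTrans_eq_one E ρ P φ
  -- Step A : stationarity gives zero expectation of increments
  have hzero : ∑ x : V → A, μ x *
      (∑ y : V → A, pinTrans E ρ P φ x y * (f (confType y) - f (confType x))) = 0 := by
    have hx : ∀ x : V → A, ∑ y : V → A, pinTrans E ρ P φ x y * (f (confType y) - f (confType x))
        = (∑ y : V → A, pinTrans E ρ P φ x y * f (confType y)) - f (confType x) := by
      intro x
      rw [show ∑ y : V → A, pinTrans E ρ P φ x y * (f (confType y) - f (confType x))
          = ∑ y : V → A, (pinTrans E ρ P φ x y * f (confType y)
              - pinTrans E ρ P φ x y * f (confType x)) from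
        Finset.sum_congr rfl fun y _ => by ring]
      rw [Finset.sum_sub_distrib, ← Finset.sum_mul, hrow x, one_mul]
    rw [Finset.sum_congr rfl fun x _ => by rw [hx x]]
    rw [Finset.sum_congr rfl fun x (_ : x ∈ Finset.univ) => mul_sub (μ x) _ _]
    rw [Finset.sum_sub_distrib]
    have hswap : ∑ x : V → A, μ x * ∑ y : V → A, pinTrans E ρ P φ x y * f (confType y)
        = ∑ y : V → A, μ y * f (confType y) := by
      rw [Finset.sum_congr rfl fun x (_ : x ∈ Finset.univ) => Finset.mul_sum Finset.univ _ (μ x)]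
      rw [Finset.sum_comm]
      refine Finset.sum_congr rfl fun y _ => ?_
      rw [← hst y, Finset.sum_mul]
      exact Finset.sum_congr rfl fun x _ => by ring
    rw [hswap]
    ring
  -- Step B : pointwise bound on the expected increment
  have hSx : ∀ x : V → A,
      ∑ y : V → A, pinTrans E ρ P φ x y * (f (confType y) - f (confType x))
        ≤ (1/n) * (-h (confType x) + z + L * ε) + M / n^2 := by
    intro x
    set θx : A → ℝ := confType x with hθx
    set Dx : A → ℝ := fun i => meanDrift E ρ P φ x i with hDx
    set r : (V → A) → ℝ := fun y => f (confType y) - f θx - g θx (confType y - θx) with hr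
    -- decomposition
    have hdecomp : ∑ y : V → A, pinTrans E ρ P φ x y * (f (confType y) - f θx)
        = (1/n) * g θx Dx + ∑ y : V → A, pinTrans E ρ P φ x y * r y := by
      have hlin : ∑ y : V → A, pinTrans E ρ P φ x y * g θx (confType y - θx)
          = g θx ((1/n) • Dx) := by
        have hvec : ((1/n) • Dx : A → ℝ)
            = ∑ y : V → A, pinTrans E ρ P φ x y • ((confType y : A → ℝ) - θx) := by
          funext i
          rw [Finset.sum_apply]
          simp only [Pi.smul_apply, Pi.sub_apply, smul_eq_mul]
          rw [hDx]
          simp only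
          rw [meanDrift]
          field_simp
          rfl
        rw [hvec, map_sum]
        exact Finset.sum_congr rfl fun y _ => by
          rw [ContinuousLinearMap.map_smul, smul_eq_mul]
      have hsplit : ∀ y : V → A, pinTrans E ρ P φ x y * (f (confType y) - f θx)
          = pinTrans E ρ P φ x y * g θx (confType y - θx) + pinTrans E ρ P φ x y * r y := by
        intro y
        rw [hr]
        simp only
        ring
      rw [Finset.sum_congr rfl fun y _ => hsplit y, Finset.sum_add_distrib, hlin,
        ContinuousLinearMap.map_smul, smul_eq_mul]
    -- remainder bound
    have hRx : |∑ y : V → A, pinTrans E ρ P φ x y * r y| ≤ M / n^2 := by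
      have hrx : r x = 0 := by
        rw [hr]
        simp only [hθx]
        rw [sub_self (confType x), map_zero]
        ring
      rw [sum_pin_mul E ρ P φ x r hrx, sum_toff_mul E ρ P φ x r]
      have hbound : ∀ p ∈ (Finset.univ ×ˢ Finset.univ : Finset (V × A)).filter
          fun p => p.2 ≠ x p.1,
          |Toff E ρ P φ x (Function.update x p.1 p.2) * r (Function.update x p.1 p.2)|
            ≤ Toff E ρ P φ x (Function.update x p.1 p.2) * (M / n^2) := by
        intro p _
        rw [abs_mul, abs_of_nonneg (toff_nonneg E ρ P φ hρ0 hρ1 hPnn hφnn x _)]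
        refine mul_le_mul_of_nonneg_left ?_ (toff_nonneg E ρ P φ hρ0 hρ1 hPnn hφnn x _)
        rw [hr]
        simp only
        calc |f (confType (Function.update x p.1 p.2)) - f θx
              - g θx (confType (Function.update x p.1 p.2) - θx)|
            ≤ M * ‖(confType (Function.update x p.1 p.2) : A → ℝ) - θx‖ ^ 2 :=
              hTay θx _ (hθn x) (confType_norm_le_one _)
          _ ≤ M / n ^ 2 := by
              have h1 := confType_update_norm hcard x p.1 p.2
              rw [← hndef] at h1
              have h2 : ‖(confType (Function.update x p.1 p.2) : A → ℝ) - θx‖ ^ 2 ≤ (1/n)^2 := by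
                have hnn := norm_nonneg ((confType (Function.update x p.1 p.2) : A → ℝ) - θx)
                nlinarith
              calc M * ‖(confType (Function.update x p.1 p.2) : A → ℝ) - θx‖ ^ 2
                  ≤ M * (1/n)^2 := mul_le_mul_of_nonneg_left h2 hM0
                _ = M / n^2 := by field_simp
      calc |∑ p ∈ (Finset.univ ×ˢ Finset.univ : Finset (V × A)).filter fun p => p.2 ≠ x p.1,
            Toff E ρ P φ x (Function.update x p.1 p.2) * r (Function.update x p.1 p.2)|
          ≤ ∑ p ∈ (Finset.univ ×ˢ Finset.univ : Finset (V × A)).filter fun p => p.2 ≠ x p.1,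
            |Toff E ρ P φ x (Function.update x p.1 p.2) * r (Function.update x p.1 p.2)| :=
            Finset.abs_sum_le_sum_abs _ _
        _ ≤ ∑ p ∈ (Finset.univ ×ˢ Finset.univ : Finset (V × A)).filter fun p => p.2 ≠ x p.1,
            Toff E ρ P φ x (Function.update x p.1 p.2) * (M / n^2) :=
            Finset.sum_le_sum hbound
        _ = (∑ z' : V → A, Toff E ρ P φ x z') * (M / n^2) := by
            rw [← Finset.sum_mul]
            congr 1
            have := sum_toff_mul E ρ P φ x (fun _ => 1)
            simp only [mul_one] at this
            rw [this]
        _ ≤ 1 * (M / n^2) := by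
            refine mul_le_mul_of_nonneg_right ?_ (by positivity)
            exact sum_toff_le_one E ρ P φ hρ0 hρ1 hPnn hP hφnn hφ hcard hm x
        _ = M / n^2 := one_mul _
    -- drift bound
    have hgD : g θx Dx ≤ -h θx + z + L * ε := by
      have hDbar : g θx (limitDrift ρ P φ θx) ≤ -h θx + z := hLyap θx (hθS x)
      have hdiff : ‖(Dx : A → ℝ) - limitDrift ρ P φ θx‖ ≤ ε := by
        rw [pi_norm_le_iff_of_nonneg hεnn]
        intro i
        rw [Pi.sub_apply, Real.norm_eq_abs]
        have := drift_close E ρ P φ hρ0 hρ1 hP hφnn hφ hm hloop hn hA x i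
        rw [← hndef] at this
        exact this
      have hL' : ‖g θx‖ ≤ L := hLb θx (hθn x)
      have habs : |g θx ((Dx : A → ℝ) - limitDrift ρ P φ θx)| ≤ L * ε := by
        calc |g θx ((Dx : A → ℝ) - limitDrift ρ P φ θx)|
            ≤ ‖g θx‖ * ‖(Dx : A → ℝ) - limitDrift ρ P φ θx‖ := (g θx).le_opNorm _
          _ ≤ L * ε := by
              have hL0' : (0:ℝ) ≤ ‖g θx‖ := norm_nonneg _
              have := le_trans hL0' hL'
              exact mul_le_mul hL' hdiff (norm_nonneg _) this
      have heq : g θx Dx = g θx (limitDrift ρ P φ θx)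
          + g θx ((Dx : A → ℝ) - limitDrift ρ P φ θx) := by
        rw [map_sub]
        ring
      rw [heq]
      have := abs_le.mp habs
      linarith
    -- combine
    calc ∑ y : V → A, pinTrans E ρ P φ x y * (f (confType y) - f θx)
        = (1/n) * g θx Dx + ∑ y : V → A, pinTrans E ρ P φ x y * r y := hdecomp
      _ ≤ (1/n) * (-h θx + z + L * ε) + M / n^2 := by
          have h1 : (1/n) * g θx Dx ≤ (1/n) * (-h θx + z + L * ε) :=
            mul_le_mul_of_nonneg_left hgD (by positivity)
          have h2 := (abs_le.mp hRx).2
          linarith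
  -- Step C : combine with stationarity
  have hfinal : 0 ≤ ∑ x : V → A, μ x * ((1/n) * (-h (confType x) + z + L * ε) + M / n^2) := by
    rw [← hzero]
    exact Finset.sum_le_sum fun x _ => mul_le_mul_of_nonneg_left (hSx x) (hμnn x)
  have hexpand : ∑ x : V → A, μ x * ((1/n) * (-h (confType x) + z + L * ε) + M / n^2)
      = (1/n) * (-(∑ x : V → A, μ x * h (confType x)) + z + L * ε + M / n) := by
    rw [Finset.sum_congr rfl fun x (_ : x ∈ Finset.univ) => show
      μ x * ((1/n) * (-h (confType x) + z + L * ε) + M / n^2)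
        = -((1/n) * (μ x * h (confType x))) + μ x * ((1/n) * (z + L * ε) + M / n^2) from by ring]
    rw [Finset.sum_add_distrib, Finset.sum_neg_distrib, ← Finset.mul_sum, ← Finset.sum_mul, hμ1]
    field_simp
    ring
  rw [hexpand] at hfinal
  have hq : 0 ≤ -(∑ x : V → A, μ x * h (confType x)) + z + L * ε + M / n := by
    have h2 := mul_nonneg (le_of_lt hn0) hfinal
    rw [show n * ((1/n) * (-(∑ x : V → A, μ x * h (confType x)) + z + L * ε + M / n))
        = -(∑ x : V → A, μ x * h (confType x)) + z + L * ε + M / n from by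
      field_simp] at h2
    exact h2
  linarith

end Key

section Markov
variable {X : Type*} [Fintype X]

lemma massOf_nonneg (μ : X → ℝ) (hμnn : ∀ x, 0 ≤ μ x) (p : X → Prop) : 0 ≤ massOf μ p := by
  unfold massOf
  refine Finset.sum_nonneg fun x _ => ?_
  split_ifs
  · exact hμnn x
  · exact le_refl 0

lemma massOf_le_one (μ : X → ℝ) (hμnn : ∀ x, 0 ≤ μ x) (hμ1 : ∑ x : X, μ x = 1)
    (p : X → Prop) : massOf μ p ≤ 1 := by
  unfold massOf
  rw [← hμ1]
  refine Finset.sum_le_sum fun x _ => ?_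
  split_ifs
  · exact le_refl _
  · exact hμnn x

lemma markov_bound (μ : X → ℝ) (hμnn : ∀ x, 0 ≤ μ x) (hμ1 : ∑ x : X, μ x = 1)
    (F : X → ℝ) (hF : ∀ x, 0 ≤ F x) (δ : ℝ) (hδ : 0 < δ) (C : ℝ)
    (hC : ∑ x : X, μ x * F x ≤ C) :
    1 - C / δ ≤ massOf μ (fun x => F x < δ) := by
  classical
  have hsplit : massOf μ (fun x => F x < δ) + massOf μ (fun x => ¬(F x < δ)) = 1 := by
    unfold massOf
    rw [← Finset.sum_add_distrib, ← hμ1]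
    refine Finset.sum_congr rfl fun x _ => ?_
    by_cases hx : F x < δ
    · rw [if_pos hx, if_neg (not_not_intro hx)]
      ring
    · rw [if_neg hx, if_pos hx]
      ring
  have h2 : massOf μ (fun x => ¬(F x < δ)) ≤ (∑ x : X, μ x * F x) / δ := by
    unfold massOf
    rw [Finset.sum_div]
    refine Finset.sum_le_sum fun x _ => ?_
    by_cases hx : F x < δ
    · rw [if_neg (not_not_intro hx)]
      have := mul_nonneg (hμnn x) (hF x)
      positivity
    · rw [if_pos hx]
      push_neg at hx
      rw [le_div_iff₀ hδ]
      calc μ x * δ ≤ μ x * F x := mul_le_mul_of_nonneg_left hx (hμnn x)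
        _ = μ x * F x := rfl
  have h3 : (∑ x : X, μ x * F x) / δ ≤ C / δ := by
    gcongr
  linarith

end Markov



/-- Theorem: concentration via approximate mean-field Lyapunov functions.
For a family of PIN models `(𝒜, ρ, P_α, φ_α)` on an ATM graph sequence admitting an
approximate mean-field Lyapunov function `(V_α)` with `∇V_α·D̄_α ≤ −h + ζ(α)` on the
simplex, `lim_{α→0} liminf_{n→∞} μ_n^{(α)}({x : h(θ(x)) < δ}) = 1` for every `δ > 0`. -/
theorem concentration_ATM_approx {A : Type*} [Fintype A] [DecidableEq A] [Nonempty A]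
    (ρ : ℝ) (P : ℝ → A → A → ℝ) (φ : ℝ → A → A → A → ℝ)
    (E : (n : ℕ) → Finset (Fin n × Fin n))
    (hmodel : ∀ α > (0 : ℝ), ∀ n, 2 ≤ n → IsPinModel (E n) ρ (P α) (φ α))
    (hATM : Tendsto (fun n => mixingGap (E n)) atTop (nhds 0))
    (W : ℝ → (A → ℝ) → ℝ) (hW : ∀ α > (0 : ℝ), ContDiff ℝ 2 (W α))
    (h : (A → ℝ) → ℝ) (hh : ContinuousOn h {θ : A → ℝ | inSimplex θ})
    (hhnn : ∀ θ : A → ℝ, inSimplex θ → 0 ≤ h θ)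
    (ζ : ℝ → ℝ) (hζnn : ∀ α ≥ (0 : ℝ), 0 ≤ ζ α)
    (hζ0 : Tendsto ζ (nhdsWithin 0 (Set.Ioi 0)) (nhds 0))
    (hLyap : ∀ α > (0 : ℝ), ∀ θ : A → ℝ, inSimplex θ →
      fderiv ℝ (W α) θ (limitDrift ρ (P α) (φ α) θ) ≤ -h θ + ζ α)
    (μ : ℝ → (n : ℕ) → (Fin n → A) → ℝ)
    (hμ : ∀ α > (0 : ℝ), ∀ n, 2 ≤ n → IsStationaryPin (E n) ρ (P α) (φ α) (μ α n)) :
    ∀ δ > (0 : ℝ),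
      Tendsto (fun α =>
          Filter.liminf (fun n => massOf (μ α n) (fun x : Fin n → A =>
            h (confType x) < δ)) atTop)
        (nhdsWithin 0 (Set.Ioi 0)) (nhds 1) := by
  intro δ hδ
  have hcA : 1 ≤ Fintype.card A := Fintype.card_pos
  refine tendsto_of_tendsto_of_tendsto_of_le_of_le'
    (g := fun α => 1 - ζ α / δ) (h := fun _ => (1:ℝ))
    ?_ tendsto_const_nhds ?_ ?_
  · -- lower envelope tends to 1
    have := (hζ0.div_const δ).const_sub 1
    simpa using this
  · -- eventual lower bound on the liminf
    filter_upwards [self_mem_nhdsWithin] with α hα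
    have hα' : (0:ℝ) < α := hα
    obtain ⟨L, M, hL0, hM0, hLb, hTay⟩ := exists_taylor_bound (hW α hα')
    set C : ℕ → ℝ := fun n => ζ α
      + L * (2 * (Fintype.card A : ℝ)^2 * (4 * mixingGap (E n) + 1/((n:ℝ) - 1)))
      + M / (n:ℝ) with hCdef
    have hmass : ∀ n, 2 ≤ n →
        1 - C n / δ ≤ massOf (μ α n) (fun x : Fin n → A => h (confType x) < δ) := by
      intro n hn
      obtain ⟨h1, h2, h3, h4, h5, h6, h7, h8⟩ := hmodel α hα' n hn
      obtain ⟨m1, m2, m3⟩ := hμ α hα' n hn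
      have hcV : 2 ≤ Fintype.card (Fin n) := by rw [Fintype.card_fin]; omega
      refine markov_bound _ m1 m2 _
        (fun x => hhnn _ ⟨confType_nonneg x, sum_confType (by omega) x⟩) δ hδ _ ?_
      have hk := key_ineq (E n) ρ (P α) (φ α) h1 h2 h3 h4 h5 h6 h7 h8 hcV hcA
        (μ α n) m1 m2 m3 (W α) L M (ζ α) hM0 hLb hTay h (hLyap α hα')
      rw [Fintype.card_fin] at hk
      exact hk
    have t1 : Tendsto (fun n : ℕ => (n:ℝ)) atTop atTop := tendsto_natCast_atTop_atTop
    have t2 : Tendsto (fun n : ℕ => (n:ℝ) - 1) atTop atTop := by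
      have := tendsto_atTop_add_const_right atTop (-1 : ℝ) t1
      simpa [sub_eq_add_neg] using this
    have t3 : Tendsto (fun n : ℕ => 1/((n:ℝ) - 1)) atTop (nhds 0) := by
      simpa [one_div, Pi.inv_def] using t2.inv_tendsto_atTop
    have t4 : Tendsto (fun n : ℕ => M/(n:ℝ)) atTop (nhds 0) := by
      have := t1.inv_tendsto_atTop.const_mul M
      simpa [div_eq_mul_inv] using this
    have t5 : Tendsto C atTop (nhds (ζ α)) := by
      have hmid := (((hATM.const_mul (4:ℝ)).add t3).const_mul
        (2 * (Fintype.card A : ℝ)^2)).const_mul L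
      have h0 : ζ α = ζ α + L * (2 * (Fintype.card A : ℝ)^2 * (4*(0:ℝ) + 0)) + 0 := by ring
      rw [h0, hCdef]
      exact ((tendsto_const_nhds (α := ℕ) (f := atTop) (x := ζ α)).add hmid).add t4
    have hCt : Tendsto (fun n => 1 - C n / δ) atTop (nhds (1 - ζ α / δ)) :=
      (t5.div_const δ).const_sub 1
    have hev : ∀ᶠ n in atTop, 1 - C n / δ
        ≤ massOf (μ α n) (fun x : Fin n → A => h (confType x) < δ) :=
      (eventually_ge_atTop 2).mono hmass
    have hbddv : IsCoboundedUnder (· ≥ ·) atTop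
        (fun n => massOf (μ α n) (fun x : Fin n → A => h (confType x) < δ)) := by
      refine Filter.IsBoundedUnder.isCoboundedUnder_ge ?_
      exact ⟨1, eventually_map.mpr ((eventually_ge_atTop 2).mono fun n hn =>
        massOf_le_one _ (hμ α hα' n hn).1 (hμ α hα' n hn).2.1 _)⟩
    calc 1 - ζ α / δ = liminf (fun n => 1 - C n / δ) atTop := (hCt.liminf_eq).symm
      _ ≤ liminf (fun n => massOf (μ α n) (fun x : Fin n → A => h (confType x) < δ)) atTop :=
          liminf_le_liminf hev hCt.isBoundedUnder_ge hbddv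
  · -- eventual upper bound 1
    filter_upwards [self_mem_nhdsWithin] with α hα
    have hα' : (0:ℝ) < α := hα
    refine liminf_le_of_frequently_le ?_ ?_
    · exact ((eventually_ge_atTop 2).mono fun n hn =>
        massOf_le_one _ (hμ α hα' n hn).1 (hμ α hα' n hn).2.1 _).frequently
    · exact ⟨0, eventually_map.mpr ((eventually_ge_atTop 2).mono fun n hn =>
        massOf_nonneg _ (hμ α hα' n hn).1 _)⟩
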